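/- arXiv:1810.00533 — 3 statements merged into one kernel-verified Lean document; each statement's English description precedes it below -/
import Mathlib

section
/- Let α and β be compositions with α ≠ 1^{ℓ(α)} and λ(α) = λ(β), and suppose r_α ≥_s r_β. Then δ_α ≥ δ_β, and if δ_α = δ_β, then q'(α) ≤_lex q'(β). -/
namespace RibbonNearEq

/-- A composition is a finite sequence of positive integers. -/
def IsComposition (α : List ℕ) : Prop := ∀ x ∈ α, 0 < x

/-- A partition is a weakly decreasing finite sequence of positive integers. -/
def IsPartitionList (ν : List ℕ) : Prop :=
  ν.Pairwise (· ≥ ·) ∧ ∀ x ∈ ν, 0 < x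

/-- The content of a tableau (given as its list of rows), as a monomial exponent
function: `contents T v` is the number of entries of `T` equal to `v`. -/
def contents (T : List (List ℕ)) : ℕ → ℕ := fun v => T.flatten.count v

/-- The rows of `T` have the lengths prescribed by the shape `sh`. -/
def RowsMatch (sh : List ℕ) (T : List (List ℕ)) : Prop :=
  T.length = sh.length ∧ ∀ i < T.length, (T.getD i []).length = sh.getD i 0

/-- Every row consists of positive integers and is weakly increasing. -/
def RowsSemistandard (T : List (List ℕ)) : Prop :=
  ∀ row ∈ T, row.Pairwise (· ≤ ·) ∧ ∀ x ∈ row, 0 < x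

/-- A semistandard Young tableau of (left-justified) partition shape `ν`:
rows weakly increase left to right, columns strictly increase top to bottom. -/
def IsSSYT (ν : List ℕ) (T : List (List ℕ)) : Prop :=
  RowsMatch ν T ∧ RowsSemistandard T ∧
  ∀ i, i + 1 < T.length → ∀ j < (T.getD (i + 1) []).length,
    (T.getD i []).getD j 0 < (T.getD (i + 1) []).getD j 0

/-- A semistandard Young tableau of ribbon shape `α` (rows listed from top to
bottom, the rightmost cell of row `i+1` directly below the leftmost cell of row
`i`): rows weakly increase, and the leftmost entry of row `i` is strictly less
than the rightmost entry of row `i+1` (the two-cell columns strictly increase). -/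
def IsRibbonSSYT (α : List ℕ) (T : List (List ℕ)) : Prop :=
  RowsMatch α T ∧ RowsSemistandard T ∧
  ∀ i, i + 1 < T.length →
    (T.getD i []).headI < (T.getD (i + 1) []).getLastD 0

/-- The Schur function `s_ν`, encoded by its monomial coefficient function: the
coefficient of `x_1^{m 1} x_2^{m 2} ⋯` is the number of SSYT of shape `ν` and
content `m`. -/
noncomputable def schur (ν : List ℕ) : (ℕ → ℕ) → ℤ :=
  fun m => (Set.ncard {T : List (List ℕ) | IsSSYT ν T ∧ contents T = m} : ℤ)

/-- The ribbon Schur function `r_α`, encoded by its monomial coefficient function. -/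
noncomputable def ribbon (α : List ℕ) : (ℕ → ℕ) → ℤ :=
  fun m => (Set.ncard {T : List (List ℕ) | IsRibbonSSYT α T ∧ contents T = m} : ℤ)

/-- `δ_α`: the number of end parts of `α` equal to `1`. -/
def deltaEnds (α : List ℕ) : ℕ :=
  (if α.headI = 1 then 1 else 0) + (if α.getLastD 0 = 1 then 1 else 0)

/-- The lengths `p_1, …, p_{R-k+1}` of the (possibly empty) runs of `1`'s in `α`
before, between, and after the parts of `α` that are at least `2`. -/
def oneRuns : List ℕ → List ℕ
  | [] => [0]
  | x :: rest =>
    if x = 1 then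
      match oneRuns rest with
      | [] => [1]
      | r :: rs => (r + 1) :: rs
    else 0 :: oneRuns rest

/-- `p'(α) = (p_1 - 1) p_2 ⋯ p_{R-k} (p_{R-k+1} - 1)`. -/
def p'List (α : List ℕ) : List ℤ :=
  let l : List ℤ := (oneRuns α).map fun n => (n : ℤ)
  (l.headI - 1) :: (l.tail.dropLast ++ [l.getLastD 0 - 1])

/-- `q'(α)`: `q'_j` is the number of entries of `p'(α)` equal to `j`. -/
def q'Seq (α : List ℕ) : ℕ → ℕ := fun j => (p'List α).count ((j : ℤ))

/-- A symmetric function is Schur-positive when it is a nonnegative linear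
combination of Schur functions indexed by partitions. -/
def SchurPos (F : (ℕ → ℕ) → ℤ) : Prop :=
  ∃ (S : Finset (List ℕ)) (c : List ℕ → ℕ),
    (∀ ν ∈ S, IsPartitionList ν) ∧
    F = fun m => ∑ ν ∈ S, (c ν : ℤ) * schur ν m

/-- Lexicographic order on sequences: `f ≤_lex g`. -/
def LexLE (f g : ℕ → ℕ) : Prop :=
  f = g ∨ ∃ j, (∀ j' < j, f j' = g j') ∧ f j < g j


/-! ### Auxiliary development -/

section Aux

open List

/-- Next chain-start value. -/
def nextC (g c : ℕ) : ℕ := if g = 1 then c + 1 else 2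

/-- The canonical (minimal) filling of the ribbon. -/
def canonRows : List ℕ → ℕ → List (List ℕ)
  | [], _ => []
  | g :: rest, c => (List.replicate (g - 1) 1 ++ [c]) :: canonRows rest (nextC g c)

/-- `DD γ c t` counts rows whose forced last entry exceeds `t`. -/
def DD : List ℕ → ℕ → ℕ → ℕ
  | [], _, _ => 0
  | g :: rest, c, t => (if t < c then 1 else 0) + DD rest (nextC g c) t

lemma nextC_pos (g c : ℕ) (hc : 1 ≤ c) : 1 ≤ nextC g c := by unfold nextC; split <;> omega

/- ### generic list helpers -/

lemma getD_zero_headI (l : List (List ℕ)) : l.getD 0 [] = l.headI := by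
  cases l with
  | nil => rfl
  | cons a t => rfl

lemma getLastD_of_ne_nil {α : Type*} {l : List α} (h : l ≠ []) (d d' : α) :
    l.getLastD d = l.getLastD d' := by
  rw [List.getLastD_eq_getLast?, List.getLastD_eq_getLast?, List.getLast?_eq_getLast h]
  rfl

lemma getLastD_cons_of_ne_nil {α : Type*} {l : List α} (h : l ≠ []) (a d : α) :
    (a :: l).getLastD d = l.getLastD d := by
  rw [List.getLastD_cons]
  exact getLastD_of_ne_nil h a d

lemma getLastD_mem {α : Type*} {l : List α} (h : l ≠ []) (d : α) : l.getLastD d ∈ l := by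
  rw [List.getLastD_eq_getLast?, List.getLast?_eq_getLast h]
  exact List.getLast_mem h

lemma headI_mem' {α : Type*} [Inhabited α] {l : List α} (h : l ≠ []) : l.headI ∈ l := by
  cases l with
  | nil => exact absurd rfl h
  | cons a t => simp

lemma headI_cons_tail {α : Type*} [Inhabited α] {l : List α} (h : l ≠ []) :
    l.headI :: l.tail = l := by
  cases l with
  | nil => exact absurd rfl h
  | cons a t => rfl

lemma countP_replicate (p : ℕ → Bool) (n a : ℕ) :
    (List.replicate n a).countP p = if p a then n else 0 := by
  induction n with
  | zero => simp
  | succ m ih => simp only [List.replicate_succ, List.countP_cons, ih]; split <;> omega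

lemma countP_le_add_gt (l : List ℕ) (t : ℕ) :
    l.countP (fun x => decide (x ≤ t)) + l.countP (fun x => decide (t < x)) = l.length := by
  induction l with
  | nil => simp
  | cons a l ih =>
    simp only [List.countP_cons, List.length_cons]
    by_cases h : a ≤ t
    · have e1 : decide (a ≤ t) = true := decide_eq_true h
      have e2 : decide (t < a) = false := decide_eq_false (by omega)
      rw [e1, e2]
      simp
      omega
    · have e1 : decide (a ≤ t) = false := decide_eq_false h
      have e2 : decide (t < a) = true := decide_eq_true (by omega)
      rw [e1, e2]
      simp
      omega

lemma countP_le_eq_sum_range (l : List ℕ) (t : ℕ) :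
    l.countP (fun x => decide (x ≤ t)) = ∑ v ∈ Finset.range (t + 1), l.count v := by
  induction l with
  | nil => simp
  | cons a l ih =>
    have hc : ∀ v, (a :: l).count v = l.count v + if a = v then 1 else 0 := by
      intro v
      rw [List.count_cons]
      congr 1
      simp
    simp only [List.countP_cons, hc, Finset.sum_add_distrib, ← ih]
    congr 1
    rw [Finset.sum_ite_eq (Finset.range (t + 1)) a (fun _ => 1)]
    simp [Nat.lt_succ_iff]

/- ### RowsMatch and IsRibbonSSYT cons lemmas -/

lemma rowsMatch_cons {g : ℕ} {γ : List ℕ} {r : List ℕ} {T : List (List ℕ)} :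
    RowsMatch (g :: γ) (r :: T) ↔ r.length = g ∧ RowsMatch γ T := by
  constructor
  · rintro ⟨h1, h2⟩
    refine ⟨?_, ?_, ?_⟩
    · have := h2 0 (by simp)
      simpa using this
    · simpa using h1
    · intro i hi
      have := h2 (i + 1) (by simp; omega)
      simpa using this
  · rintro ⟨hr, h1, h2⟩
    refine ⟨by simpa using h1, ?_⟩
    intro i hi
    cases i with
    | zero => simpa using hr
    | succ i =>
      have hi' : i < T.length := by simp at hi; omega
      simpa using h2 i hi'

lemma isRibbonSSYT_nil : IsRibbonSSYT [] [] := by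
  refine ⟨⟨rfl, ?_⟩, ?_, ?_⟩
  · intro i hi; simp at hi
  · intro row h; simp at h
  · intro i hi; simp at hi

lemma isRibbonSSYT_cons {g : ℕ} {γ : List ℕ} {r : List ℕ} {T : List (List ℕ)} :
    IsRibbonSSYT (g :: γ) (r :: T) ↔
      r.length = g ∧ r.Pairwise (· ≤ ·) ∧ (∀ x ∈ r, 0 < x) ∧ IsRibbonSSYT γ T ∧
        (T = [] ∨ r.headI < T.headI.getLastD 0) := by
  constructor
  · rintro ⟨hm, hss, hcol⟩
    obtain ⟨hr, hm'⟩ := rowsMatch_cons.mp hm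
    obtain ⟨hs, hp⟩ := hss r (List.mem_cons_self)
    refine ⟨hr, hs, hp, ⟨hm', ?_, ?_⟩, ?_⟩
    · intro row hrow
      exact hss row (List.mem_cons_of_mem _ hrow)
    · intro i hi
      have := hcol (i + 1) (by simp only [List.length_cons]; omega)
      simpa using this
    · cases T with
      | nil => exact Or.inl rfl
      | cons r2 T2 =>
        right
        have h0 := hcol 0 (by simp)
        simpa using h0
  · rintro ⟨hr, hs, hp, ⟨hm', hss', hcol'⟩, hlink⟩
    refine ⟨rowsMatch_cons.mpr ⟨hr, hm'⟩, ?_, ?_⟩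
    · intro row hrow
      rcases List.mem_cons.mp hrow with h | h
      · exact h ▸ ⟨hs, hp⟩
      · exact hss' row h
    · intro i hi
      cases i with
      | zero =>
        rcases hlink with h | h
        · subst h; simp at hi
        · cases T with
          | nil => simp at hi
          | cons r2 T2 => simpa using h
      | succ i =>
        have hi' : i + 1 < T.length := by simp at hi; omega
        simpa using hcol' i hi'

lemma isRibbonSSYT_length {γ : List ℕ} {T : List (List ℕ)} (h : IsRibbonSSYT γ T) :
    T.length = γ.length := h.1.1

/- ### canonical filling -/

lemma canonRow_length (g c : ℕ) (hg : 0 < g) :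
    (List.replicate (g - 1) 1 ++ [c]).length = g := by
  simp; omega

lemma canonRow_headI (g c : ℕ) (hg : 0 < g) :
    (List.replicate (g - 1) 1 ++ [c]).headI = if g = 1 then c else 1 := by
  rcases g with _ | g
  · omega
  · rcases g with _ | g
    · simp
    · simp [List.replicate_succ]

lemma canonRow_getLastD (k c d : ℕ) : (List.replicate k 1 ++ [c]).getLastD d = c := by
  induction k with
  | zero => simp
  | succ m ih => rw [List.replicate_succ, List.cons_append,
      getLastD_cons_of_ne_nil (by simp) 1 d]; exact ih

lemma canonRows_headI_getLastD (g : ℕ) (rest : List ℕ) (c : ℕ) :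
    ((canonRows (g :: rest) c).headI).getLastD 0 = c := by
  show ((List.replicate (g - 1) 1 ++ [c]) :: canonRows rest (nextC g c)).headI.getLastD 0 = c
  simp only [List.headI]
  exact canonRow_getLastD _ _ _

lemma canonRows_isRibbon :
    ∀ (γ : List ℕ) (c : ℕ), (∀ x ∈ γ, 0 < x) → 1 ≤ c → IsRibbonSSYT γ (canonRows γ c)
  | [], c, _, _ => isRibbonSSYT_nil
  | g :: rest, c, hγ, hc => by
    have hg : 0 < g := hγ g (List.mem_cons_self)
    show IsRibbonSSYT (g :: rest) ((List.replicate (g - 1) 1 ++ [c]) :: canonRows rest (nextC g c))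
    rw [isRibbonSSYT_cons]
    refine ⟨canonRow_length g c hg, ?_, ?_, ?_, ?_⟩
    · show List.Pairwise (· ≤ ·) _
      rw [List.pairwise_append]
      refine ⟨List.pairwise_replicate.mpr (by simp), by simp, ?_⟩
      intro x hx y hy
      rw [List.eq_of_mem_replicate hx]
      simp at hy
      omega
    · intro x hx
      rcases List.mem_append.mp hx with h | h
      · rw [List.eq_of_mem_replicate h]; omega
      · simp at h; omega
    · exact canonRows_isRibbon rest (nextC g c) (fun x hx => hγ x (List.mem_cons_of_mem _ hx))
        (nextC_pos g c hc)
    · cases rest with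
      | nil => exact Or.inl rfl
      | cons g2 rest2 =>
        right
        rw [canonRows_headI_getLastD, canonRow_headI g c hg]
        unfold nextC
        split <;> omega

lemma canonRows_flatten_length :
    ∀ (γ : List ℕ) (c : ℕ), (∀ x ∈ γ, 0 < x) → (canonRows γ c).flatten.length = γ.sum
  | [], _, _ => rfl
  | g :: rest, c, hγ => by
    have hg : 0 < g := hγ g (List.mem_cons_self)
    show ((List.replicate (g - 1) 1 ++ [c]) ++ (canonRows rest (nextC g c)).flatten).length
        = g + rest.sum
    rw [List.length_append,
      canonRows_flatten_length rest (nextC g c) (fun x hx => hγ x (List.mem_cons_of_mem _ hx))]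
    simp only [List.length_append, List.length_replicate, List.length_cons, List.length_nil]
    omega

lemma canonRows_flatten_countP (t : ℕ) (ht : 1 ≤ t) :
    ∀ (γ : List ℕ) (c : ℕ),
      (canonRows γ c).flatten.countP (fun x => decide (t < x)) = DD γ c t
  | [], _ => rfl
  | g :: rest, c => by
    show ((List.replicate (g - 1) 1 ++ [c]) ++ (canonRows rest (nextC g c)).flatten).countP _
        = (if t < c then 1 else 0) + DD rest (nextC g c) t
    rw [List.countP_append, List.countP_append,
      canonRows_flatten_countP t ht rest (nextC g c), countP_replicate]
    have h1 : (decide (t < 1)) = false := by simp; omega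
    rw [h1]
    simp only [Bool.false_eq_true, if_false]
    congr 1
    simp only [List.countP_cons, List.countP_nil, Nat.zero_add]
    by_cases h : t < c
    · simp [h]
    · simp [h]

/- ### lower bound for arbitrary fillings -/

lemma ribbon_flatten_countP_ge (t : ℕ) :
    ∀ (γ : List ℕ) (T : List (List ℕ)) (c : ℕ), IsRibbonSSYT γ T → (∀ x ∈ γ, 0 < x) →
      (T = [] ∨ c ≤ T.headI.getLastD 0) →
      DD γ c t ≤ T.flatten.countP (fun x => decide (t < x))
  | [], T, c, hT, _, _ => by
    have : T = [] := List.length_eq_zero_iff.mp (isRibbonSSYT_length hT)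
    subst this
    simp [DD]
  | g :: rest, T, c, hT, hγ, hlink => by
    cases T with
    | nil =>
      have := isRibbonSSYT_length hT
      simp at this
    | cons r T' =>
      obtain ⟨hr, hs, hp, hT', hlink'⟩ := isRibbonSSYT_cons.mp hT
      have hg : 0 < g := hγ g (List.mem_cons_self)
      have hrne : r ≠ [] := by
        intro h
        rw [h] at hr
        simp at hr
        omega
      have hcle : c ≤ r.getLastD 0 := by
        rcases hlink with h | h
        · simp at h
        · simpa using h
      show DD (g :: rest) c t ≤ (r ++ T'.flatten).countP (fun x => decide (t < x))
      rw [List.countP_append]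
      have h1 : (if t < c then 1 else 0) ≤ r.countP (fun x => decide (t < x)) := by
        split
        · rename_i htc
          have : 0 < r.countP (fun x => decide (t < x)) := by
            rw [List.countP_pos_iff]
            refine ⟨r.getLastD 0, getLastD_mem hrne 0, ?_⟩
            simp only [decide_eq_true_eq]
            omega
          omega
        · omega
      have h2 : DD rest (nextC g c) t ≤ T'.flatten.countP (fun x => decide (t < x)) := by
        apply ribbon_flatten_countP_ge t rest T' (nextC g c) hT'
          (fun x hx => hγ x (List.mem_cons_of_mem _ hx))
        rcases hlink' with h | h
        · exact Or.inl h
        · right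
          have hhead : (if g = 1 then c else 1) ≤ r.headI := by
            split
            · rename_i hg1
              have : r.length = 1 := by omega
              obtain ⟨a, ha⟩ := List.length_eq_one_iff.mp this
              subst ha
              simpa using hcle
            · have := hp r.headI (headI_mem' hrne)
              omega
          by_cases hg1 : g = 1
          · rw [if_pos hg1] at hhead
            rw [hg1]
            show (if (1:ℕ) = 1 then c + 1 else 2) ≤ _
            rw [if_pos rfl]
            omega
          · rw [if_neg hg1] at hhead
            show (if g = 1 then c + 1 else 2) ≤ _
            rw [if_neg hg1]
            omega
      exact Nat.add_le_add h1 h2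

/- ### flatten determines the tableau -/

lemma rowsMatch_flatten_inj :
    ∀ (γ : List ℕ) (T T' : List (List ℕ)), RowsMatch γ T → RowsMatch γ T' →
      T.flatten = T'.flatten → T = T'
  | [], T, T', hT, hT', _ => by
    have h1 : T = [] := List.length_eq_zero_iff.mp hT.1
    have h2 : T' = [] := List.length_eq_zero_iff.mp hT'.1
    rw [h1, h2]
  | g :: γ, T, T', hT, hT', hf => by
    cases T with
    | nil => have := hT.1; simp at this
    | cons r Ts =>
      cases T' with
      | nil => have := hT'.1; simp at this
      | cons r' Ts' =>
        obtain ⟨hr, hm⟩ := rowsMatch_cons.mp hT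
        obtain ⟨hr', hm'⟩ := rowsMatch_cons.mp hT'
        simp only [List.flatten_cons] at hf
        obtain ⟨he1, he2⟩ := List.append_inj hf (by rw [hr, hr'])
        rw [he1, rowsMatch_flatten_inj γ Ts Ts' hm hm' he2]

lemma rowsMatch_map_length {γ : List ℕ} {T : List (List ℕ)} (h : RowsMatch γ T) :
    T.map List.length = γ := by
  apply List.ext_getElem (by simp [h.1])
  intro i hi hi'
  have hiT : i < T.length := by simpa using hi
  have := h.2 i hiT
  rw [List.getD_eq_getElem T [] hiT, List.getD_eq_getElem γ 0 hi'] at this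
  simpa using this

lemma rowsMatch_flatten_length {γ : List ℕ} {T : List (List ℕ)} (h : RowsMatch γ T) :
    T.flatten.length = γ.sum := by
  rw [List.length_flatten, rowsMatch_map_length h]

/- ### finiteness -/

lemma ribbon_set_finite (γ : List ℕ) (T₀ : List (List ℕ)) :
    {T : List (List ℕ) | IsRibbonSSYT γ T ∧ contents T = contents T₀}.Finite := by
  classical
  set n := γ.sum with hn
  set B := T₀.flatten.sum + 1 with hB
  have key : ∀ T : List (List ℕ), IsRibbonSSYT γ T → contents T = contents T₀ →
      T.flatten.length = n ∧ ∀ x ∈ T.flatten, x < B := by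
    intro T hT hc
    refine ⟨rowsMatch_flatten_length hT.1, ?_⟩
    intro x hx
    have h1 : 0 < T.flatten.count x := List.count_pos_iff.mpr hx
    have h2 : T.flatten.count x = T₀.flatten.count x := congrFun hc x
    have h3 : x ∈ T₀.flatten := List.count_pos_iff.mp (by omega)
    have h4 : x ≤ T₀.flatten.sum := List.single_le_sum (fun y _ => Nat.zero_le y) x h3
    omega
  have : Finite ↥{T : List (List ℕ) | IsRibbonSSYT γ T ∧ contents T = contents T₀} := by
    apply Finite.of_injective (β := Fin n → Fin B)
      (fun T i => ⟨T.1.flatten.getD (i : ℕ) 0, by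
        obtain ⟨hlen, hb⟩ := key T.1 T.2.1 T.2.2
        have hi : (i : ℕ) < T.1.flatten.length := by rw [hlen]; exact i.isLt
        rw [List.getD_eq_getElem _ _ hi]
        exact hb _ (List.getElem_mem hi)⟩)
    intro T T' hTT
    apply Subtype.ext
    obtain ⟨hlen, _⟩ := key T.1 T.2.1 T.2.2
    obtain ⟨hlen', _⟩ := key T'.1 T'.2.1 T'.2.2
    have hfe : T.1.flatten = T'.1.flatten := by
      apply List.ext_getElem (by rw [hlen, hlen'])
      intro i hi hi'
      have hi2 : i < n := by rwa [hlen] at hi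
      have := congrFun hTT ⟨i, hi2⟩
      simp only [Fin.mk.injEq] at this
      rwa [List.getD_eq_getElem _ _ hi, List.getD_eq_getElem _ _ hi'] at this
    exact rowsMatch_flatten_inj γ T.1 T'.1 T.2.1.1 T'.2.1.1 hfe
  exact Set.finite_coe_iff.mp this

/- ### Schur positivity gives pointwise nonnegativity -/

lemma schurPos_nonneg {F : (ℕ → ℕ) → ℤ} (h : SchurPos F) (m : ℕ → ℕ) : 0 ≤ F m := by
  obtain ⟨S, c, _, hF⟩ := h
  rw [hF]
  apply Finset.sum_nonneg
  intro ν _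
  apply mul_nonneg (Int.natCast_nonneg _)
  unfold schur
  exact Int.natCast_nonneg _

/- ### the main monomial comparison -/

lemma DD_comparison {α β : List ℕ}
    (hα : IsComposition α) (hβ : IsComposition β)
    (hsum : α.sum = β.sum)
    (hpos : SchurPos (ribbon α - ribbon β)) :
    ∀ t : ℕ, 1 ≤ t → DD α 1 t ≤ DD β 1 t := by
  intro t ht
  by_contra hlt
  push_neg at hlt
  set Tβ := canonRows β 1 with hTβ
  set m := contents Tβ with hm
  have hβrib : IsRibbonSSYT β Tβ := canonRows_isRibbon β 1 hβ le_rfl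
  have hfin : {T : List (List ℕ) | IsRibbonSSYT β T ∧ contents T = m}.Finite :=
    ribbon_set_finite β Tβ
  have hbpos : 0 < ribbon β m := by
    show (0 : ℤ) < ((Set.ncard _ : ℕ) : ℤ)
    have : 0 < Set.ncard {T : List (List ℕ) | IsRibbonSSYT β T ∧ contents T = m} :=
      (Set.ncard_pos hfin).mpr ⟨Tβ, hβrib, rfl⟩
    exact_mod_cast this
  have hazero : ribbon α m = 0 := by
    show ((Set.ncard _ : ℕ) : ℤ) = 0
    have hempty : {T : List (List ℕ) | IsRibbonSSYT α T ∧ contents T = m} = ∅ := by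
      rw [Set.eq_empty_iff_forall_notMem]
      rintro T ⟨hT, hc⟩
      -- counts of small entries agree
      have hcount : ∀ v, T.flatten.count v = Tβ.flatten.count v := fun v => congrFun hc v
      have hle : T.flatten.countP (fun x => decide (x ≤ t))
          = Tβ.flatten.countP (fun x => decide (x ≤ t)) := by
        rw [countP_le_eq_sum_range, countP_le_eq_sum_range]
        exact Finset.sum_congr rfl (fun v _ => hcount v)
      have hlenT : T.flatten.length = β.sum := by
        rw [rowsMatch_flatten_length hT.1, hsum]
      have hlenTβ : Tβ.flatten.length = β.sum := canonRows_flatten_length β 1 hβ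
      have hgt : T.flatten.countP (fun x => decide (t < x))
          = Tβ.flatten.countP (fun x => decide (t < x)) := by
        have e1 := countP_le_add_gt T.flatten t
        have e2 := countP_le_add_gt Tβ.flatten t
        omega
      have hbound := ribbon_flatten_countP_ge t α T 1 hT hα
        (by
          cases T with
          | nil => exact Or.inl rfl
          | cons r T' =>
            right
            cases α with
            | nil => have := isRibbonSSYT_length hT; simp at this
            | cons a αs =>
              obtain ⟨hr, _, hp, _, _⟩ := isRibbonSSYT_cons.mp hT
              have ha : 0 < a := hα a (List.mem_cons_self)
              have hrne : r ≠ [] := by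
                intro hnil
                rw [hnil] at hr
                simp at hr
                omega
              have := hp (r.getLastD 0) (getLastD_mem hrne 0)
              simpa [Nat.one_le_iff_ne_zero, Nat.pos_iff_ne_zero] using this)
      have hcanon : Tβ.flatten.countP (fun x => decide (t < x)) = DD β 1 t :=
        canonRows_flatten_countP t ht β 1
      omega
    rw [hempty]
    simp
  have hF := schurPos_nonneg hpos m
  rw [Pi.sub_apply, hazero, sub_nonneg] at hF
  omega


/- ### `oneRuns` structure -/

lemma oneRuns_ne_nil : ∀ γ : List ℕ, oneRuns γ ≠ []
  | [] => by simp [oneRuns]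
  | x :: rest => by
    by_cases hx : x = 1
    · subst hx
      rcases h : oneRuns rest with _ | ⟨r, rs⟩
      · exact absurd h (oneRuns_ne_nil rest)
      · simp [oneRuns, h]
    · simp [oneRuns, hx]

lemma oneRuns_cons_one (rest : List ℕ) :
    oneRuns (1 :: rest) = ((oneRuns rest).headI + 1) :: (oneRuns rest).tail := by
  rcases h : oneRuns rest with _ | ⟨r, rs⟩
  · exact absurd h (oneRuns_ne_nil rest)
  · simp [oneRuns, h]

lemma oneRuns_cons_ne {x : ℕ} (hx : x ≠ 1) (rest : List ℕ) :
    oneRuns (x :: rest) = 0 :: oneRuns rest := by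
  simp [oneRuns, hx]

lemma oneRuns_replicate (p : ℕ) : oneRuns (List.replicate p 1) = [p] := by
  induction p with
  | zero => rfl
  | succ m ih => rw [List.replicate_succ, oneRuns_cons_one, ih]; rfl

lemma oneRuns_rep_append (p : ℕ) {z : ℕ} (hz : z ≠ 1) (rest : List ℕ) :
    oneRuns (List.replicate p 1 ++ z :: rest) = p :: oneRuns rest := by
  induction p with
  | zero => simpa using oneRuns_cons_ne hz rest
  | succ m ih => rw [List.replicate_succ, List.cons_append, oneRuns_cons_one, ih]; rfl

lemma length_oneRuns : ∀ γ : List ℕ,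
    (oneRuns γ).length = γ.countP (fun x => decide (x ≠ 1)) + 1
  | [] => by simp [oneRuns]
  | x :: rest => by
    have hrec := length_oneRuns rest
    have hne := oneRuns_ne_nil rest
    have hpos : 0 < (oneRuns rest).length := List.length_pos_iff.mpr hne
    by_cases hx : x = 1
    · subst hx
      rw [oneRuns_cons_one, List.length_cons, List.length_tail]
      have hcp : (1 :: rest).countP (fun x => decide (x ≠ 1)) = rest.countP (fun x => decide (x ≠ 1)) := by
        simp
      rw [hcp]
      omega
    · rw [oneRuns_cons_ne hx, List.length_cons]
      have hcp : (x :: rest).countP (fun x => decide (x ≠ 1)) = rest.countP (fun x => decide (x ≠ 1)) + 1 := by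
        simp [hx]
      rw [hcp]
      omega

lemma sum_oneRuns : ∀ γ : List ℕ, (oneRuns γ).sum = γ.count 1
  | [] => by simp [oneRuns]
  | x :: rest => by
    have hrec := sum_oneRuns rest
    have hne := oneRuns_ne_nil rest
    by_cases hx : x = 1
    · subst hx
      rw [oneRuns_cons_one, List.sum_cons]
      have hht : (oneRuns rest).headI + (oneRuns rest).tail.sum = (oneRuns rest).sum := by
        conv_rhs => rw [← headI_cons_tail hne]
        rw [List.sum_cons]
      have hcount : (1 :: rest).count 1 = rest.count 1 + 1 := by
        rw [List.count_cons]
        simp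
      omega
    · rw [oneRuns_cons_ne hx, List.sum_cons]
      have hcount : (x :: rest).count 1 = rest.count 1 := by
        rw [List.count_cons]
        simp [hx]
      omega

lemma headI_oneRuns {γ : List ℕ} (h : γ ≠ []) :
    ((oneRuns γ).headI = 0) ↔ γ.headI ≠ 1 := by
  cases γ with
  | nil => exact absurd rfl h
  | cons x rest =>
    by_cases hx : x = 1
    · subst hx
      rw [oneRuns_cons_one]
      simp
    · rw [oneRuns_cons_ne hx]
      simp [hx]

lemma getLastD_oneRuns : ∀ γ : List ℕ, γ ≠ [] →
    (((oneRuns γ).getLastD 0 = 0) ↔ γ.getLastD 0 ≠ 1)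
  | [], h => absurd rfl h
  | x :: rest, _ => by
    have horne := oneRuns_ne_nil rest
    by_cases hrne : rest = []
    · subst hrne
      by_cases hx : x = 1
      · subst hx
        rw [oneRuns_cons_one]
        simp [oneRuns]
      · rw [oneRuns_cons_ne hx]
        simp [oneRuns, hx]
    · have hγlast : (x :: rest).getLastD 0 = rest.getLastD 0 :=
        getLastD_cons_of_ne_nil hrne x 0
      by_cases hx : x = 1
      · subst hx
        rw [oneRuns_cons_one]
        rcases ht : (oneRuns rest).tail with _ | ⟨u, us⟩
        · -- oneRuns rest is a singleton, so rest is all ones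
          have hlen : (oneRuns rest).length = 1 := by
            conv_lhs => rw [← headI_cons_tail horne]
            rw [ht]
            rfl
          have hcnt : rest.countP (fun x => decide (x ≠ 1)) = 0 := by
            have := length_oneRuns rest
            omega
          have hall : ∀ a ∈ rest, a = 1 := by
            intro a ha
            have := List.countP_eq_zero.mp hcnt a ha
            simpa using this
          have hlast1 : rest.getLastD 0 = 1 := hall _ (getLastD_mem hrne 0)
          rw [hγlast, hlast1]
          simp
        · have h2 : (oneRuns rest).getLastD 0 = (oneRuns rest).tail.getLastD 0 := by
            conv_lhs => rw [← headI_cons_tail horne]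
            exact getLastD_cons_of_ne_nil (by rw [ht]; simp) _ _
          rw [getLastD_cons_of_ne_nil (by simp : (u :: us) ≠ []) _ _, ← ht, ← h2, hγlast]
          exact getLastD_oneRuns rest hrne
      · rw [oneRuns_cons_ne hx, getLastD_cons_of_ne_nil horne, hγlast]
        exact getLastD_oneRuns rest hrne

/- ### the integer lists `Lc`, `W`, and `Gm` -/

/-- The cast of `oneRuns` to integers. -/
def Lc (γ : List ℕ) : List ℤ := (oneRuns γ).map fun n => (n : ℤ)

lemma coeList_eq : ∀ l : List ℕ, (l.map fun n => (n : ℤ)) = l.map (fun n : ℕ => (n : ℤ)) := by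
  intro l
  induction l with
  | nil => rfl
  | cons x l ih => simp_all [List.flatMap_cons]

lemma Lc_eq (γ : List ℕ) : Lc γ = (oneRuns γ).map (fun n : ℕ => (n : ℤ)) := by
  rw [Lc]
  exact coeList_eq _

/-- Tail part of `p'List`. -/
def W (rest : List ℕ) : List ℤ := (Lc rest).dropLast ++ [(Lc rest).getLastD 0 - 1]

/-- `Gm t l = Σ max(x + 2 - t, 0)`. -/
def Gm (t : ℕ) (l : List ℤ) : ℤ := (l.map (fun x => max (x + 2 - (t : ℤ)) 0)).sum

lemma Gm_nil (t : ℕ) : Gm t [] = 0 := rfl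

lemma Gm_cons (t : ℕ) (a : ℤ) (l : List ℤ) :
    Gm t (a :: l) = max (a + 2 - (t : ℤ)) 0 + Gm t l := by
  simp [Gm]

lemma p'List_eq (γ : List ℕ) :
    p'List γ = ((Lc γ).headI - 1) :: ((Lc γ).tail.dropLast ++ [(Lc γ).getLastD 0 - 1]) := rfl

lemma Lc_ne_nil (γ : List ℕ) : Lc γ ≠ [] := by
  intro h
  have hl := congrArg List.length h
  rw [Lc_eq, List.length_map, List.length_nil] at hl
  exact oneRuns_ne_nil γ (List.length_eq_zero_iff.mp hl)

lemma Lc_headI (γ : List ℕ) : (Lc γ).headI = (((oneRuns γ).headI : ℕ) : ℤ) := by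
  rw [Lc_eq]
  rcases h : oneRuns γ with _ | ⟨a, l⟩
  · exact absurd h (oneRuns_ne_nil γ)
  · simp [h]

lemma getLastD_map_cast : ∀ l : List ℕ, l ≠ [] →
    (l.map (fun n : ℕ => (n : ℤ))).getLastD 0 = ((l.getLastD 0 : ℕ) : ℤ)
  | [], h => absurd rfl h
  | [a], _ => by
    rw [List.map_cons, List.map_nil, List.getLastD_cons, List.getLastD_cons]
    rfl
  | a :: b :: l, _ => by
    have hne : (b :: l) ≠ [] := by simp
    have hne' : ((b :: l).map (fun n : ℕ => (n : ℤ))) ≠ [] := by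
      rw [List.map_cons]
      exact List.cons_ne_nil _ _
    rw [List.map_cons, getLastD_cons_of_ne_nil hne' _ _, getLastD_cons_of_ne_nil hne a 0]
    exact getLastD_map_cast (b :: l) hne

lemma Lc_getLastD (γ : List ℕ) :
    (Lc γ).getLastD 0 = (((oneRuns γ).getLastD 0 : ℕ) : ℤ) := by
  rw [Lc_eq]
  exact getLastD_map_cast _ (oneRuns_ne_nil γ)

lemma sum_map_cast (l : List ℕ) : (l.map (fun n : ℕ => (n : ℤ))).sum = ((l.sum : ℕ) : ℤ) := by
  induction l with
  | nil => simp
  | cons a l ih =>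
    rw [List.map_cons, List.sum_cons, ih, List.sum_cons, Nat.cast_add]

lemma Lc_rep_append (p : ℕ) {z : ℕ} (hz : z ≠ 1) (rest : List ℕ) :
    Lc (List.replicate p 1 ++ z :: rest) = ((p : ℕ) : ℤ) :: Lc rest := by
  rw [Lc_eq, Lc_eq, oneRuns_rep_append p hz rest, List.map_cons]

lemma p'List_decomp (p : ℕ) {z : ℕ} (hz : z ≠ 1) (rest : List ℕ) :
    p'List (List.replicate p 1 ++ z :: rest) = (((p : ℕ) : ℤ) - 1) :: W rest := by
  rw [p'List_eq, Lc_rep_append p hz rest]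
  have hne := Lc_ne_nil rest
  rw [getLastD_cons_of_ne_nil hne _ _]
  rfl

lemma W_ones (q : ℕ) : W (List.replicate q 1) = [((q : ℕ) : ℤ) - 1] := by
  rw [W, Lc_eq, oneRuns_replicate, List.map_cons, List.map_nil]
  simp [List.getLastD_cons]

lemma W_cons (q : ℕ) {z : ℕ} (hz : z ≠ 1) (rest : List ℕ) :
    W (List.replicate q 1 ++ z :: rest) = ((q : ℕ) : ℤ) :: W rest := by
  have hne := Lc_ne_nil rest
  rw [W, Lc_rep_append q hz rest, List.dropLast_cons_of_ne_nil hne,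
    getLastD_cons_of_ne_nil hne _ _]
  rfl

/- ### closed forms for `DD` -/

lemma DD_ones_big (t : ℕ) : ∀ (p c : ℕ), t + 1 ≤ c → DD (List.replicate p 1) c t = p
  | 0, c, _ => rfl
  | p + 1, c, h => by
    rw [List.replicate_succ]
    show (if t < c then 1 else 0) + DD (List.replicate p 1) (nextC 1 c) t = p + 1
    rw [if_pos (by omega)]
    have hn : nextC 1 c = c + 1 := by simp [nextC]
    rw [hn, DD_ones_big t p (c + 1) (by omega)]
    omega

lemma DD_ones (t : ℕ) : ∀ (p c : ℕ), 1 ≤ c → c ≤ t + 1 →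
    ((DD (List.replicate p 1) c t : ℕ) : ℤ) = max ((c : ℤ) + p - 1 - t) 0
  | 0, c, _, h2 => by
    show ((0 : ℕ) : ℤ) = _
    rw [max_eq_right (by push_cast; omega)]
    rfl
  | p + 1, c, h1, h2 => by
    rw [List.replicate_succ]
    show (((if t < c then 1 else 0) + DD (List.replicate p 1) (nextC 1 c) t : ℕ) : ℤ) = _
    have hn : nextC 1 c = c + 1 := by simp [nextC]
    by_cases hc : c = t + 1
    · rw [if_pos (by omega), hn, DD_ones_big t p (c + 1) (by omega)]
      rw [max_eq_left (by push_cast; omega)]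
      push_cast
      omega
    · rw [if_neg (by omega), hn]
      push_cast
      rw [DD_ones t p (c + 1) (by omega) (by omega)]
      have harg : ((c : ℤ) + 1 + ((p : ℕ) : ℤ) - 1 - ((t : ℕ) : ℤ)) = (c : ℤ) + (((p : ℕ) : ℤ) + 1) - 1 - ((t : ℕ) : ℤ) := by ring
      push_cast
      push_cast at harg
      rw [harg]
      ring

lemma DD_append_rep (t : ℕ) : ∀ (p : ℕ) (w : List ℕ) (c : ℕ),
    DD (List.replicate p 1 ++ w) c t = DD (List.replicate p 1) c t + DD w (c + p) t
  | 0, w, c => by simp [DD]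
  | p + 1, w, c => by
    have hn : nextC 1 c = c + 1 := by simp [nextC]
    have e1 : DD (List.replicate (p + 1) 1 ++ w) c t
        = (if t < c then 1 else 0) + DD (List.replicate p 1 ++ w) (c + 1) t := by
      rw [List.replicate_succ, List.cons_append]
      show (if t < c then 1 else 0) + DD (List.replicate p 1 ++ w) (nextC 1 c) t = _
      rw [hn]
    have e2 : DD (List.replicate (p + 1) 1) c t
        = (if t < c then 1 else 0) + DD (List.replicate p 1) (c + 1) t := by
      rw [List.replicate_succ]
      show (if t < c then 1 else 0) + DD (List.replicate p 1) (nextC 1 c) t = _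
      rw [hn]
    rw [e1, e2, DD_append_rep t p w (c + 1)]
    have e3 : c + 1 + p = c + (p + 1) := by omega
    rw [e3]
    omega

lemma DD_cons_ne (t : ℕ) {z : ℕ} (hz : z ≠ 1) (rest : List ℕ) (c : ℕ) :
    DD (z :: rest) c t = (if t < c then 1 else 0) + DD rest 2 t := by
  show (if t < c then 1 else 0) + DD rest (nextC z c) t = _
  simp [nextC, hz]

lemma arith1 (c q t : ℕ) (hct : c ≤ t + 1) :
    max ((c : ℤ) + q - 1 - t) 0 + (if t < c + q then (1 : ℤ) else 0) = max ((c : ℤ) + q - t) 0 := by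
  by_cases h : t < c + q
  · rw [if_pos h, max_eq_left (by push_cast; omega), max_eq_left (by push_cast; omega)]
    ring
  · rw [if_neg h, max_eq_right (by push_cast; omega), max_eq_right (by push_cast; omega)]
    ring

/- ### compositions decompose into leading ones and a big part -/

lemma comp_decomp : ∀ γ : List ℕ, (∃ z ∈ γ, z ≠ 1) →
    ∃ p z rest, z ≠ 1 ∧ γ = List.replicate p 1 ++ z :: rest
  | [], h => by
    rcases h with ⟨z, hz, _⟩
    simp at hz
  | x :: w, h => by
    by_cases hx : x = 1
    · have hw : ∃ z ∈ w, z ≠ 1 := by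
        rcases h with ⟨z, hz, hz1⟩
        rcases List.mem_cons.mp hz with h' | h'
        · exact absurd (h' ▸ hx) hz1
        · exact ⟨z, h', hz1⟩
      obtain ⟨p, z, rest, hz, he⟩ := comp_decomp w hw
      exact ⟨p + 1, z, rest, hz, by rw [List.replicate_succ, List.cons_append, ← he, hx]⟩
    · exact ⟨0, x, w, hx, by simp⟩

/- ### P2 and P1 : `DD` equals `Gm` of `p'List` -/

lemma P2_ones (t q : ℕ) (ht : 1 ≤ t) :
    ((DD (List.replicate q 1) 2 t : ℕ) : ℤ) = Gm t (W (List.replicate q 1)) := by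
  rw [DD_ones t q 2 (by omega) (by omega), W_ones, Gm_cons, Gm_nil]
  push_cast
  have harg : (((q : ℕ) : ℤ) - 1 + 2 - ((t : ℕ) : ℤ)) = ((2 : ℤ) + ((q : ℕ) : ℤ) - 1 - ((t : ℕ) : ℤ)) := by ring
  push_cast at harg
  rw [harg]
  ring

lemma P2 (n : ℕ) : ∀ (rest : List ℕ), rest.length ≤ n → ∀ t : ℕ, 1 ≤ t →
    ((DD rest 2 t : ℕ) : ℤ) = Gm t (W rest) := by
  induction n with
  | zero =>
    intro rest hlen t ht
    have hr : rest = [] := List.length_eq_zero_iff.mp (by omega)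
    subst hr
    have := P2_ones t 0 ht
    simpa using this
  | succ n ih =>
    intro rest hlen t ht
    by_cases hall : ∃ z ∈ rest, z ≠ 1
    · obtain ⟨p, z, rest', hz, he⟩ := comp_decomp rest hall
      have hlen' : rest'.length ≤ n := by
        subst he
        simp only [List.length_append, List.length_replicate, List.length_cons] at hlen
        omega
      subst he
      rw [DD_append_rep t p (z :: rest') 2, DD_cons_ne t hz rest' (2 + p)]
      rw [W_cons p hz rest', Gm_cons]
      push_cast
      rw [DD_ones t p 2 (by omega) (by omega)]
      rw [ih rest' hlen' t ht]
      push_cast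
      have h1 := arith1 2 p t (by omega)
      push_cast at h1
      have harg : (((p : ℕ) : ℤ) + 2 - ((t : ℕ) : ℤ)) = ((2 : ℤ) + ((p : ℕ) : ℤ) - ((t : ℕ) : ℤ)) := by ring
      rw [harg]
      linarith [h1]
    · push_neg at hall
      have hrep : rest = List.replicate rest.length 1 := List.eq_replicate_of_mem hall
      rw [hrep]
      exact P2_ones t rest.length ht

lemma P1 (γ : List ℕ) (hne : ∃ z ∈ γ, z ≠ 1) (t : ℕ) (ht : 1 ≤ t) :
    ((DD γ 1 t : ℕ) : ℤ) = Gm t (p'List γ) := by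
  obtain ⟨p, z, rest, hz, he⟩ := comp_decomp γ hne
  subst he
  rw [DD_append_rep t p (z :: rest) 1, DD_cons_ne t hz rest (1 + p)]
  rw [p'List_decomp p hz rest, Gm_cons]
  push_cast
  rw [DD_ones t p 1 le_rfl (by omega)]
  rw [P2 rest.length rest le_rfl t ht]
  push_cast
  have h1 := arith1 1 p t (by omega)
  push_cast at h1
  have harg : (((p : ℕ) : ℤ) - 1 + 2 - ((t : ℕ) : ℤ)) = ((1 : ℤ) + ((p : ℕ) : ℤ) - ((t : ℕ) : ℤ)) := by ring
  rw [harg]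
  linarith [h1]

/- ### arithmetic identities on integer lists -/

lemma Gm_two (l : List ℤ) (h : ∀ x ∈ l, -1 ≤ x) :
    Gm 2 l = l.sum + (l.countP (fun x => decide (x = -1)) : ℤ) := by
  induction l with
  | nil => rfl
  | cons a l ih =>
    have ha := h a (List.mem_cons_self)
    have hl := ih (fun x hx => h x (List.mem_cons_of_mem _ hx))
    rw [Gm_cons, hl, List.sum_cons, List.countP_cons]
    by_cases hae : a = -1
    · have e1 : decide (a = -1) = true := decide_eq_true hae
      rw [e1, max_eq_right (by push_cast; omega)]
      try simp only [Bool.false_eq_true, eq_self_iff_true, if_true, if_false]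
      push_cast
      omega
    · have e1 : decide (a = -1) = false := decide_eq_false hae
      rw [e1, max_eq_left (by push_cast; omega)]
      try simp only [Bool.false_eq_true, eq_self_iff_true, if_true, if_false]
      push_cast
      omega

lemma Gm_succ_eq (t : ℕ) (l : List ℤ) :
    Gm t l = Gm (t + 1) l + (l.countP (fun x => decide ((t : ℤ) - 1 ≤ x)) : ℤ) := by
  induction l with
  | nil => rfl
  | cons a l ih =>
    rw [Gm_cons, Gm_cons, ih, List.countP_cons]
    by_cases h : (t : ℤ) - 1 ≤ a
    · have e1 : decide ((t : ℤ) - 1 ≤ a) = true := decide_eq_true h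
      rw [e1, max_eq_left (by push_cast; omega), max_eq_left (by push_cast; omega)]
      try simp only [Bool.false_eq_true, eq_self_iff_true, if_true, if_false]
      push_cast
      ring
    · have e1 : decide ((t : ℤ) - 1 ≤ a) = false := decide_eq_false h
      rw [e1, max_eq_right (by push_cast; omega), max_eq_right (by push_cast; omega)]
      try simp only [Bool.false_eq_true, eq_self_iff_true, if_true, if_false]
      push_cast
      ring

lemma countP_ge_succ (j : ℤ) (l : List ℤ) :
    l.countP (fun x => decide (j ≤ x))
      = l.countP (fun x => decide (j + 1 ≤ x)) + l.count j := by
  induction l with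
  | nil => simp
  | cons a l ih =>
    rw [List.countP_cons, List.countP_cons, List.count_cons]
    by_cases h1 : j ≤ a
    · have e1 : decide (j ≤ a) = true := decide_eq_true h1
      by_cases h2 : a = j
      · have e2 : decide (j + 1 ≤ a) = false := decide_eq_false (by omega)
        have e3 : (a == j) = true := beq_iff_eq.mpr h2
        rw [e1, e2, e3]
        try simp only [Bool.false_eq_true, eq_self_iff_true, if_true, if_false]
        omega
      · have e2 : decide (j + 1 ≤ a) = true := decide_eq_true (by omega)
        have e3 : (a == j) = false := by simp [h2]
        rw [e1, e2, e3]
        try simp only [Bool.false_eq_true, eq_self_iff_true, if_true, if_false]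
        omega
    · have e1 : decide (j ≤ a) = false := decide_eq_false h1
      have e2 : decide (j + 1 ≤ a) = false := decide_eq_false (by omega)
      have e3 : (a == j) = false := by
        simp only [beq_eq_false_iff_ne, ne_eq]
        omega
      rw [e1, e2, e3]
      try simp only [Bool.false_eq_true, eq_self_iff_true, if_true, if_false]
      omega

lemma countP_ge_zero (l : List ℤ) (h : ∀ x ∈ l, -1 ≤ x) :
    l.countP (fun x => decide ((0 : ℤ) ≤ x)) + l.countP (fun x => decide (x = -1)) = l.length := by
  induction l with
  | nil => rfl
  | cons a l ih =>
    have ha := h a (List.mem_cons_self)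
    have ihh := ih (fun x hx => h x (List.mem_cons_of_mem _ hx))
    rw [List.countP_cons, List.countP_cons, List.length_cons]
    by_cases h0 : (0 : ℤ) ≤ a
    · have e1 : decide ((0 : ℤ) ≤ a) = true := decide_eq_true h0
      have e2 : decide (a = -1) = false := decide_eq_false (by omega)
      rw [e1, e2]
      try simp only [Bool.false_eq_true, eq_self_iff_true, if_true, if_false]
      omega
    · have e1 : decide ((0 : ℤ) ≤ a) = false := decide_eq_false h0
      have e2 : decide (a = -1) = true := decide_eq_true (by omega)
      rw [e1, e2]
      try simp only [Bool.false_eq_true, eq_self_iff_true, if_true, if_false]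
      omega

lemma countP_pred_eq (c d : ℤ) (h : c = d) (l : List ℤ) :
    l.countP (fun x => decide (c ≤ x)) = l.countP (fun x => decide (d ≤ x)) := by rw [h]

/- ### structural facts about `p'List` -/

lemma p'List_mem_ge (γ : List ℕ) : ∀ x ∈ p'List γ, -1 ≤ x := by
  intro x hx
  rw [p'List_eq] at hx
  rcases List.mem_cons.mp hx with h | h
  · subst h
    rw [Lc_headI]
    have := Int.natCast_nonneg ((oneRuns γ).headI)
    omega
  · rcases List.mem_append.mp h with h' | h'
    · have h3 : x ∈ Lc γ := List.tail_subset _ (List.dropLast_subset _ h')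
      rw [Lc_eq] at h3
      obtain ⟨n, _, rfl⟩ := List.mem_map.mp h3
      have := Int.natCast_nonneg n
      omega
    · simp only [List.mem_singleton] at h'
      subst h'
      rw [Lc_getLastD]
      have := Int.natCast_nonneg ((oneRuns γ).getLastD 0)
      omega

lemma Lc_length (γ : List ℕ) : (Lc γ).length = (oneRuns γ).length := by
  rw [Lc_eq, List.length_map]

lemma p'List_length (γ : List ℕ) (h2 : 2 ≤ (oneRuns γ).length) :
    (p'List γ).length = (oneRuns γ).length := by
  rw [p'List_eq, List.length_cons, List.length_append, List.length_dropLast,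
    List.length_tail, Lc_length, List.length_cons, List.length_nil]
  omega

lemma p'List_sum (γ : List ℕ) (h2 : 2 ≤ (oneRuns γ).length) :
    (p'List γ).sum = ((γ.count 1 : ℕ) : ℤ) - 2 := by
  have hlcne : Lc γ ≠ [] := Lc_ne_nil γ
  have htne : (Lc γ).tail ≠ [] := by
    intro h
    have hl := congrArg List.length h
    rw [List.length_tail, Lc_length] at hl
    simp at hl
    omega
  have hsplit : (Lc γ).tail.dropLast.sum + (Lc γ).tail.getLast htne = (Lc γ).tail.sum := by
    conv_rhs => rw [← List.dropLast_append_getLast htne]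
    rw [List.sum_append, List.sum_cons, List.sum_nil]
    ring
  have hgl : (Lc γ).getLastD 0 = (Lc γ).tail.getLast htne := by
    conv_lhs => rw [← headI_cons_tail hlcne]
    rw [getLastD_cons_of_ne_nil htne _ _, List.getLastD_eq_getLast?,
      List.getLast?_eq_getLast htne]
    rfl
  have hsum : (Lc γ).headI + (Lc γ).tail.sum = (Lc γ).sum := by
    conv_rhs => rw [← headI_cons_tail hlcne]
    rw [List.sum_cons]
  have hLsum : (Lc γ).sum = ((γ.count 1 : ℕ) : ℤ) := by
    rw [Lc_eq, sum_map_cast, sum_oneRuns]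
  rw [p'List_eq, List.sum_cons, List.sum_append, List.sum_cons, List.sum_nil, hgl]
  linarith [hsplit, hsum, hLsum]

lemma p'List_count_neg (γ : List ℕ) (hγne : γ ≠ []) :
    ((p'List γ).countP (fun x => decide (x = -1))) + deltaEnds γ = 2 := by
  rw [p'List_eq, List.countP_cons, List.countP_append, List.countP_cons, List.countP_nil]
  have hmid : (Lc γ).tail.dropLast.countP (fun x => decide (x = -1)) = 0 := by
    rw [List.countP_eq_zero]
    intro a ha
    have h3 : a ∈ Lc γ := List.tail_subset _ (List.dropLast_subset _ ha)
    rw [Lc_eq] at h3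
    obtain ⟨n, _, rfl⟩ := List.mem_map.mp h3
    intro h
    rw [decide_eq_true_eq] at h
    omega
  rw [hmid, Lc_headI, Lc_getLastD]
  unfold deltaEnds
  have hh := headI_oneRuns hγne
  have hl := getLastD_oneRuns γ hγne
  by_cases c1 : (oneRuns γ).headI = 0 <;> by_cases c2 : (oneRuns γ).getLastD 0 = 0
  · have e1 : decide ((((oneRuns γ).headI : ℕ) : ℤ) - 1 = -1) = true :=
      decide_eq_true (by rw [c1]; ring)
    have e2 : decide ((((oneRuns γ).getLastD 0 : ℕ) : ℤ) - 1 = -1) = true :=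
      decide_eq_true (by rw [c2]; ring)
    have f1 : ¬ γ.headI = 1 := hh.mp c1
    have f2 : ¬ γ.getLastD 0 = 1 := hl.mp c2
    rw [e1, e2, if_neg f1, if_neg f2]
    try simp only [Bool.false_eq_true, eq_self_iff_true, if_true, if_false]
  · have e1 : decide ((((oneRuns γ).headI : ℕ) : ℤ) - 1 = -1) = true :=
      decide_eq_true (by rw [c1]; ring)
    have e2 : decide ((((oneRuns γ).getLastD 0 : ℕ) : ℤ) - 1 = -1) = false :=
      decide_eq_false (by intro h; apply c2; omega)
    have f1 : ¬ γ.headI = 1 := hh.mp c1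
    have f2 : γ.getLastD 0 = 1 := by
      by_contra h
      exact c2 (hl.mpr h)
    rw [e1, e2, if_neg f1, if_pos f2]
    try simp only [Bool.false_eq_true, eq_self_iff_true, if_true, if_false]
  · have e1 : decide ((((oneRuns γ).headI : ℕ) : ℤ) - 1 = -1) = false :=
      decide_eq_false (by intro h; apply c1; omega)
    have e2 : decide ((((oneRuns γ).getLastD 0 : ℕ) : ℤ) - 1 = -1) = true :=
      decide_eq_true (by rw [c2]; ring)
    have f1 : γ.headI = 1 := by
      by_contra h
      exact c1 (hh.mpr h)
    have f2 : ¬ γ.getLastD 0 = 1 := hl.mp c2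
    rw [e1, e2, if_pos f1, if_neg f2]
    try simp only [Bool.false_eq_true, eq_self_iff_true, if_true, if_false]
  · have e1 : decide ((((oneRuns γ).headI : ℕ) : ℤ) - 1 = -1) = false :=
      decide_eq_false (by intro h; apply c1; omega)
    have e2 : decide ((((oneRuns γ).getLastD 0 : ℕ) : ℤ) - 1 = -1) = false :=
      decide_eq_false (by intro h; apply c2; omega)
    have f1 : γ.headI = 1 := by
      by_contra h
      exact c1 (hh.mpr h)
    have f2 : γ.getLastD 0 = 1 := by
      by_contra h
      exact c2 (hl.mpr h)
    rw [e1, e2, if_pos f1, if_pos f2]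
    try simp only [Bool.false_eq_true, eq_self_iff_true, if_true, if_false]

end Aux

/-- Proposition 2.11: if `λ(α) = λ(β)` and `r_α ≥_s r_β`, then `δ_α ≥ δ_β`, and
if `δ_α = δ_β` then `q'(α) ≤_lex q'(β)`. -/
theorem schur_positive_delta_and_q'
    (α β : List ℕ)
    (hα : IsComposition α) (hβ : IsComposition β)
    (hα1 : α ≠ List.replicate α.length 1)
    (hlam : (↑α : Multiset ℕ) = (↑β : Multiset ℕ))
    (hpos : SchurPos (ribbon α - ribbon β)) :
    deltaEnds β ≤ deltaEnds α ∧
      (deltaEnds α = deltaEnds β → LexLE (q'Seq α) (q'Seq β)) := by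
  classical
  have hperm : α.Perm β := Multiset.coe_eq_coe.mp hlam
  have hαne : ∃ z ∈ α, z ≠ 1 := by
    by_contra h
    push_neg at h
    exact hα1 (List.eq_replicate_of_mem h)
  have hβne : ∃ z ∈ β, z ≠ 1 := by
    obtain ⟨z, hz, h1⟩ := hαne
    exact ⟨z, hperm.mem_iff.mp hz, h1⟩
  have hαnil : α ≠ [] := by
    obtain ⟨z, hz, _⟩ := hαne
    intro h
    rw [h] at hz
    simp at hz
  have hβnil : β ≠ [] := by
    obtain ⟨z, hz, _⟩ := hβne
    intro h
    rw [h] at hz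
    simp at hz
  have hsum : α.sum = β.sum := hperm.sum_eq
  have hDD := DD_comparison hα hβ hsum hpos
  have hcntP : α.countP (fun x => decide (x ≠ 1)) = β.countP (fun x => decide (x ≠ 1)) :=
    hperm.countP_eq _
  have hORα : 2 ≤ (oneRuns α).length := by
    rw [length_oneRuns]
    have hc : 0 < α.countP (fun x => decide (x ≠ 1)) := by
      rw [List.countP_pos_iff]
      obtain ⟨z, hz, h1⟩ := hαne
      exact ⟨z, hz, decide_eq_true h1⟩
    omega
  have hORβ : 2 ≤ (oneRuns β).length := by
    rw [length_oneRuns, ← hcntP]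
    rw [length_oneRuns] at hORα
    omega
  have HG : ∀ t : ℕ, 1 ≤ t → Gm t (p'List α) ≤ Gm t (p'List β) := by
    intro t ht
    rw [← P1 α hαne t ht, ← P1 β hβne t ht]
    exact_mod_cast hDD t ht
  have hgeA := p'List_mem_ge α
  have hgeB := p'List_mem_ge β
  have hsumAB : (p'List α).sum = (p'List β).sum := by
    rw [p'List_sum α hORα, p'List_sum β hORβ, hperm.count_eq]
  have hG2 := HG 2 (by omega)
  rw [Gm_two _ hgeA, Gm_two _ hgeB, hsumAB] at hG2
  have hcnt : (p'List α).countP (fun x => decide (x = -1))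
      ≤ (p'List β).countP (fun x => decide (x = -1)) := by
    exact_mod_cast (by linarith :
      (((p'List α).countP (fun x => decide (x = -1)) : ℕ) : ℤ)
        ≤ (((p'List β).countP (fun x => decide (x = -1)) : ℕ) : ℤ))
  have hdA := p'List_count_neg α hαnil
  have hdB := p'List_count_neg β hβnil
  constructor
  · omega
  · intro hδeq
    have hcnteq : (p'List α).countP (fun x => decide (x = -1))
        = (p'List β).countP (fun x => decide (x = -1)) := by omega
    by_cases hq : q'Seq α = q'Seq β
    · exact Or.inl hq
    · right
      have hex : ∃ j, q'Seq α j ≠ q'Seq β j := by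
        by_contra h
        push_neg at h
        exact hq (funext h)
      have hdspec : q'Seq α (Nat.find hex) ≠ q'Seq β (Nat.find hex) := Nat.find_spec hex
      have hdmin : ∀ j < Nat.find hex, q'Seq α j = q'Seq β j :=
        fun j hj => not_not.mp (Nat.find_min hex hj)
      set d := Nat.find hex with hd
      have hlenAB : (p'List α).length = (p'List β).length := by
        rw [p'List_length α hORα, p'List_length β hORβ, length_oneRuns, length_oneRuns, hcntP]
      -- counts of entries equal to j, as counts on the integer lists
      have hqcount : ∀ j : ℕ, q'Seq α j = (p'List α).count ((j : ℕ) : ℤ) := fun _ => rfl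
      have hqcountB : ∀ j : ℕ, q'Seq β j = (p'List β).count ((j : ℕ) : ℤ) := fun _ => rfl
      -- claim1 : the tail-counts agree up to d
      have claim1 : ∀ j : ℕ, j ≤ d →
          (p'List α).countP (fun x => decide (((j : ℕ) : ℤ) ≤ x))
            = (p'List β).countP (fun x => decide (((j : ℕ) : ℤ) ≤ x)) := by
        intro j
        induction j with
        | zero =>
          intro _
          have hA := countP_ge_zero (p'List α) hgeA
          have hB := countP_ge_zero (p'List β) hgeB
          have e0 : ((0 : ℕ) : ℤ) = (0 : ℤ) := rfl
          rw [countP_pred_eq _ _ e0, countP_pred_eq _ _ e0]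
          omega
        | succ j ihj =>
          intro hjd
          have hj : j ≤ d := by omega
          have hA := countP_ge_succ ((j : ℕ) : ℤ) (p'List α)
          have hB := countP_ge_succ ((j : ℕ) : ℤ) (p'List β)
          have ecast : ((j : ℕ) : ℤ) + 1 = (((j + 1 : ℕ) : ℕ) : ℤ) := by push_cast; ring
          rw [countP_pred_eq _ _ ecast] at hA hB
          have hcount : (p'List α).count ((j : ℕ) : ℤ) = (p'List β).count ((j : ℕ) : ℤ) := by
            rw [← hqcount j, ← hqcountB j]
            exact hdmin j (by omega)
          have := ihj hj
          omega
      -- claim2 : Gm agree up to d+2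
      have claim2 : ∀ s : ℕ, s ≤ d → Gm (s + 2) (p'List α) = Gm (s + 2) (p'List β) := by
        intro s
        induction s with
        | zero =>
          intro _
          rw [Gm_two _ hgeA, Gm_two _ hgeB, hsumAB, hcnteq]
        | succ s ihs =>
          intro hsd
          have hs : s ≤ d := by omega
          have hA := Gm_succ_eq (s + 2) (p'List α)
          have hB := Gm_succ_eq (s + 2) (p'List β)
          have ecast : ((s + 2 : ℕ) : ℤ) - 1 = (((s + 1 : ℕ) : ℕ) : ℤ) := by push_cast; ring
          rw [countP_pred_eq _ _ ecast] at hA hB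
          have hT := claim1 (s + 1) (by omega)
          have hGs := ihs hs
          have e23 : s + 1 + 2 = s + 2 + 1 := by omega
          rw [e23]
          omega
      -- final step
      have hGd3 := HG (d + 3) (by omega)
      have hA := Gm_succ_eq (d + 2) (p'List α)
      have hB := Gm_succ_eq (d + 2) (p'List β)
      have ecast : ((d + 2 : ℕ) : ℤ) - 1 = (((d + 1 : ℕ) : ℕ) : ℤ) := by push_cast; ring
      rw [countP_pred_eq _ _ ecast] at hA hB
      have hG2d := claim2 d le_rfl
      have e23 : d + 3 = d + 2 + 1 := by omega
      rw [e23] at hGd3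
      have hT1 : (p'List β).countP (fun x => decide (((d + 1 : ℕ) : ℤ) ≤ x))
          ≤ (p'List α).countP (fun x => decide (((d + 1 : ℕ) : ℤ) ≤ x)) := by
        have : ((((p'List β).countP (fun x => decide (((d + 1 : ℕ) : ℤ) ≤ x))) : ℕ) : ℤ)
            ≤ (((p'List α).countP (fun x => decide (((d + 1 : ℕ) : ℤ) ≤ x))) : ℕ) := by
          omega
        exact_mod_cast this
      have hsA := countP_ge_succ ((d : ℕ) : ℤ) (p'List α)
      have hsB := countP_ge_succ ((d : ℕ) : ℤ) (p'List β)
      have ecast2 : ((d : ℕ) : ℤ) + 1 = (((d + 1 : ℕ) : ℕ) : ℤ) := by push_cast; ring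
      rw [countP_pred_eq _ _ ecast2] at hsA hsB
      have hTd := claim1 d le_rfl
      have hle : q'Seq α d ≤ q'Seq β d := by
        rw [hqcount d, hqcountB d]
        omega
      exact ⟨d, hdmin, lt_of_le_of_ne hle hdspec⟩

end RibbonNearEq
end

section
/- Let α and β be compositions of equal size N and equal length R, both different from 1^R, with λ(α) = λ(β), δ_α = δ_β, α_1 ≤ α_R, and β_1 ≤ β_R. If α_1 = β_1 and α_R < β_R, then |E_{α*,ε_0(α*)}| = |E_{β*,ε_0(α*)}| + 1, where γ* denotes the reverse of a composition γ. -/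
namespace RibbonNearEq

/-- `ε(α) = (z_1 - 2 + χ(p_1 = 0)) (z_2 - 2) ⋯ (z_{R-k-1} - 2)
(z_{R-k} - 2 + χ(p_{R-k+1} = 0))`, where `z_1, …, z_{R-k}` are the parts of `α`
that are at least `2`; `p_1 = 0` iff `α` starts with a part `≠ 1`, and
`p_{R-k+1} = 0` iff `α` ends with a part `≠ 1`. -/
def epsList (α : List ℕ) : List ℕ :=
  let e := (α.filter fun x => decide (x ≠ 1)).map fun z => z - 2
  let e1 := if α.headI ≠ 1 then e.set 0 (e.getD 0 0 + 1) else e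
  if α.getLastD 0 ≠ 1 then e1.set (e1.length - 1) (e1.getD (e1.length - 1) 0 + 1) else e1

/-- `E_{α,M}`: lattice points `(x_1, …, x_{R-k-1})` with `Σ x_i = M` and
`0 ≤ x_i ≤ ε_i(α)` for `1 ≤ i ≤ R-k-1`. -/
def Eset (α : List ℕ) (M : ℕ) : Set (List ℤ) :=
  {x | x.length = (epsList α).length - 1 ∧ x.sum = (M : ℤ) ∧
       ∀ i < x.length, 0 ≤ x.getD i 0 ∧ x.getD i 0 ≤ ((epsList α).getD (i + 1) 0 : ℤ)}

def count : List ℕ → ℤ → ℕ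
  | [], M => if M = 0 then 1 else 0
  | b :: c, M => ∑ j ∈ Finset.range (b + 1), count c (M - j)

lemma count_neg : ∀ (c : List ℕ) (M : ℤ), M < 0 → count c M = 0
  | [], M, h => by simp [count]; omega
  | b :: c, M, h => by
    simp only [count]
    exact Finset.sum_eq_zero fun j _ => count_neg c _ (by omega)

lemma count_zero : ∀ c : List ℕ, count c 0 = 1
  | [] => by simp [count]
  | b :: c => by
    rw [count, Finset.sum_eq_single 0]
    · simpa using count_zero c
    · intro j _ hne
      exact count_neg c _ (by omega)
    · simp

lemma count_perm {c c' : List ℕ} (h : c.Perm c') : ∀ M, count c M = count c' M := by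
  induction h with
  | nil => intro M; rfl
  | cons x _ ih =>
    intro M
    simp only [count]
    exact Finset.sum_congr rfl fun j _ => ih _
  | swap x y l =>
    intro M
    simp only [count]
    rw [Finset.sum_comm]
    refine Finset.sum_congr rfl fun j _ => Finset.sum_congr rfl fun i _ => ?_
    congr 1
    ring
  | trans _ _ ih1 ih2 => exact fun M => (ih1 M).trans (ih2 M)

lemma count_key (s : List ℕ) (M c : ℕ) (hM : 1 ≤ M) (hc : M ≤ c) :
    count (c :: s) (M : ℤ) = count ((M - 1) :: s) (M : ℤ) + 1 := by
  have hM1 : M - 1 + 1 = M := by omega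
  simp only [count, hM1]
  have hsub : Finset.range (M + 1) ⊆ Finset.range (c + 1) := by
    apply Finset.range_subset_range.2; omega
  rw [← Finset.sum_subset hsub (fun j _ hj => count_neg s _ (by
      simp only [Finset.mem_range] at hj; omega))]
  rw [Finset.sum_range_succ]
  have h0 : (M : ℤ) - M = 0 := by ring
  rw [h0, count_zero]

def solF : List ℕ → ℤ → Finset (List ℤ)
  | [], M => if M = 0 then {[]} else ∅
  | b :: c, M =>
    (Finset.range (b + 1)).biUnion fun j => (solF c (M - j)).image (List.cons (j : ℤ))

lemma solF_card : ∀ (c : List ℕ) (M : ℤ), (solF c M).card = count c M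
  | [], M => by by_cases h : M = 0 <;> simp [solF, count, h]
  | b :: c, M => by
    rw [solF, count, Finset.card_biUnion]
    · refine Finset.sum_congr rfl fun j _ => ?_
      rw [Finset.card_image_of_injective _ (List.cons_injective), solF_card]
    · intro j _ k _ hjk
      rw [Function.onFun, Finset.disjoint_left]
      rintro x hx hx'
      simp only [Finset.mem_image] at hx hx'
      obtain ⟨y, -, rfl⟩ := hx
      obtain ⟨z, -, hz⟩ := hx'
      apply hjk
      exact_mod_cast (List.cons.injEq _ _ _ _ ▸ hz).1.symm

lemma mem_solF : ∀ (c : List ℕ) (M : ℤ) (x : List ℤ),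
    x ∈ solF c M ↔ x.length = c.length ∧ x.sum = M ∧
      ∀ i < x.length, 0 ≤ x.getD i 0 ∧ x.getD i 0 ≤ (c.getD i 0 : ℤ)
  | [], M, x => by
    simp only [solF]
    constructor
    · intro hx
      by_cases h : M = 0
      · subst h; simp_all
      · simp [h] at hx
    · rintro ⟨h1, h2, -⟩
      simp only [List.length_nil, List.length_eq_zero_iff] at h1
      subst h1
      simp at h2
      simp [← h2]
  | b :: c, M, x => by
    simp only [solF, Finset.mem_biUnion, Finset.mem_image, Finset.mem_range]
    constructor
    · rintro ⟨j, hj, y, hy, rfl⟩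
      rw [mem_solF] at hy
      obtain ⟨hl, hs, hb⟩ := hy
      refine ⟨by simp [hl], by simp [hs], ?_⟩
      rintro (_ | i) hi
      · simp only [List.getD_cons_zero]
        constructor
        · exact Int.ofNat_nonneg j
        · exact_mod_cast Nat.lt_succ_iff.mp hj
      · simp only [List.getD_cons_succ]
        exact hb i (by simpa using hi)
    · rintro ⟨hl, hs, hb⟩
      match x with
      | [] => simp at hl
      | x0 :: y =>
        have h0 := hb 0 (by simp)
        simp only [List.getD_cons_zero] at h0
        refine ⟨x0.toNat, ?_, y, ?_, ?_⟩
        · have : (x0.toNat : ℤ) ≤ (b : ℤ) := by rw [Int.toNat_of_nonneg h0.1]; exact h0.2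
          omega
        · rw [mem_solF]
          refine ⟨by simpa using hl, ?_, ?_⟩
          · rw [Int.toNat_of_nonneg h0.1]
            simp only [List.sum_cons] at hs
            omega
          · intro i hi
            have := hb (i + 1) (by simpa using hi)
            simpa using this
        · rw [Int.toNat_of_nonneg h0.1]

lemma set_concat {A : Type*} (l : List A) (x v : A) :
    (l ++ [x]).set l.length v = l ++ [v] := by
  induction l with
  | nil => rfl
  | cons h t ih => simp [List.set, ih]

lemma getD_concat {A : Type*} (l : List A) (x d : A) :
    (l ++ [x]).getD l.length d = x := by
  induction l with
  | nil => rfl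
  | cons h t ih => simpa using ih

lemma getD_tail (l : List ℕ) (i : ℕ) : l.getD (i + 1) 0 = l.tail.getD i 0 := by
  cases l <;> simp

lemma Eset_eq (γ : List ℕ) (M : ℕ) :
    Eset γ M = ↑(solF (epsList γ).tail (M : ℤ)) := by
  ext x
  simp only [Eset, Set.mem_setOf_eq, Finset.mem_coe, mem_solF]
  constructor
  · rintro ⟨h1, h2, h3⟩
    refine ⟨by rw [h1, List.length_tail], h2, fun i hi => ?_⟩
    rw [← getD_tail]
    exact h3 i hi
  · rintro ⟨h1, h2, h3⟩
    refine ⟨by rw [h1, List.length_tail], h2, fun i hi => ?_⟩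
    rw [getD_tail]
    exact h3 i hi

lemma ncard_Eset (γ : List ℕ) (M : ℕ) :
    (Eset γ M).ncard = count (epsList γ).tail (M : ℤ) := by
  rw [Eset_eq, Set.ncard_coe_finset, solF_card]

lemma eps_rev (w : List ℕ) (a : ℕ) (hw : w ≠ []) (hw0 : ∀ x ∈ w, 0 < x) (ha : 2 ≤ a) :
    (epsList (w ++ [a]).reverse).getD 0 0 = a - 1 ∧
    (a - 2) ::ₘ (↑((epsList (w ++ [a]).reverse).tail) : Multiset ℕ) =
      if w.headI ≠ 1 then
        (w.headI - 1) ::ₘ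
          ((↑(((w ++ [a]).filter fun x => decide (x ≠ 1)).map fun z => z - 2) : Multiset ℕ).erase
            (w.headI - 2))
      else ↑(((w ++ [a]).filter fun x => decide (x ≠ 1)).map fun z => z - 2) := by
  obtain ⟨c, w', rfl⟩ : ∃ c w', w = c :: w' := by
    cases w with
    | nil => exact absurd rfl hw
    | cons c w' => exact ⟨c, w', rfl⟩
  have ha1 : ¬(a = 1) := by omega
  have hγ : ((c :: w') ++ [a]).reverse = a :: (w'.reverse ++ [c]) := by simp
  rw [hγ]
  have hhead : (a :: (w'.reverse ++ [c])).headI = a := rfl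
  have hlast : (a :: (w'.reverse ++ [c])).getLastD 0 = c := by
    have h : a :: (w'.reverse ++ [c]) = (a :: w'.reverse) ++ [c] := by simp
    rw [h, List.getLastD_concat]
  by_cases hc : c = 1
  · subst hc
    have hfilt : (a :: (w'.reverse ++ [1])).filter (fun x => decide (x ≠ 1)) =
        a :: (w'.filter fun x => decide (x ≠ 1)).reverse := by
      simp [List.filter_cons, List.filter_append, List.filter_reverse, ha1]
    have heps : epsList (a :: (w'.reverse ++ [1])) =
        (a - 2 + 1) :: ((w'.filter fun x => decide (x ≠ 1)).map fun z => z - 2).reverse := by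
      rw [epsList]
      simp only [hfilt, hhead, hlast]
      rw [if_neg (by simp), if_pos ha1]
      simp [List.map_reverse]
    rw [heps]
    refine ⟨by simp; omega, ?_⟩
    rw [if_neg (by simp), List.tail_cons]
    have hcoe : (↑(((w'.filter fun x => decide (x ≠ 1)).map fun z => z - 2).reverse) : Multiset ℕ)
        = ↑((w'.filter fun x => decide (x ≠ 1)).map fun z => z - 2) := Multiset.coe_reverse _
    rw [hcoe]
    have hZ : (((1 :: w') ++ [a]).filter fun x => decide (x ≠ 1)).map (fun z => z - 2)
        = ((w'.filter fun x => decide (x ≠ 1)).map fun z => z - 2) ++ [a - 2] := by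
      simp [List.filter_cons, List.filter_append, ha1]
    rw [hZ, ← Multiset.coe_add,
      show ((↑[a - 2] : Multiset ℕ)) = {a - 2} from rfl, add_comm, Multiset.singleton_add]
  · have hc2 : 2 ≤ c := by
      have := hw0 c (by simp)
      omega
    set U := (w'.filter fun x => decide (x ≠ 1)).map fun z => z - 2 with hU
    have hfilt : (a :: (w'.reverse ++ [c])).filter (fun x => decide (x ≠ 1)) =
        a :: ((w'.filter fun x => decide (x ≠ 1)).reverse ++ [c]) := by
      simp [List.filter_cons, List.filter_append, List.filter_reverse, ha1, hc]
    have hmap : ((a :: ((w'.filter fun x => decide (x ≠ 1)).reverse ++ [c])).map fun z => z - 2)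
        = (a - 2) :: (U.reverse ++ [c - 2]) := by
      simp [hU, List.map_reverse]
    have heps : epsList (a :: (w'.reverse ++ [c])) =
        (a - 2 + 1) :: (U.reverse ++ [c - 2 + 1]) := by
      rw [epsList]
      simp only [hfilt, hmap, hhead, hlast]
      rw [if_pos hc, if_pos ha1]
      have hset0 : ((a - 2) :: (U.reverse ++ [c - 2])).set 0
          (((a - 2) :: (U.reverse ++ [c - 2])).getD 0 0 + 1)
          = (a - 2 + 1) :: (U.reverse ++ [c - 2]) := by simp
      rw [hset0]
      have hlen : ((a - 2 + 1) :: (U.reverse ++ [c - 2])).length - 1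
          = U.reverse.length + 1 := by simp
      rw [hlen]
      have hgd : ((a - 2 + 1) :: (U.reverse ++ [c - 2])).getD (U.reverse.length + 1) 0
          = c - 2 := by
        rw [List.getD_cons_succ]
        exact getD_concat _ _ _
      rw [hgd]
      rw [show ((a - 2 + 1) :: (U.reverse ++ [c - 2])).set (U.reverse.length + 1) (c - 2 + 1)
          = (a - 2 + 1) :: ((U.reverse ++ [c - 2]).set U.reverse.length (c - 2 + 1)) from rfl]
      rw [set_concat]
    rw [heps]
    refine ⟨by simp; omega, ?_⟩
    rw [if_pos (by simpa using hc), List.tail_cons]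
    simp only [List.headI_cons]
    have hZ : (((c :: w') ++ [a]).filter fun x => decide (x ≠ 1)).map (fun z => z - 2)
        = (c - 2) :: (U ++ [a - 2]) := by
      simp [List.filter_cons, List.filter_append, ha1, hc, hU]
    rw [hZ]
    have hW : (↑((c - 2) :: (U ++ [a - 2])) : Multiset ℕ)
        = (c - 2) ::ₘ ((a - 2) ::ₘ ↑U) := by
      rw [← Multiset.cons_coe, ← Multiset.coe_add]
      congr 1
      rw [show ((↑[a - 2] : Multiset ℕ)) = {a - 2} from rfl, add_comm, Multiset.singleton_add]
    rw [hW, Multiset.erase_cons_head]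
    have hL : (↑(U.reverse ++ [c - 2 + 1]) : Multiset ℕ) = (c - 2 + 1) ::ₘ ↑U := by
      rw [← Multiset.coe_add, Multiset.coe_reverse,
        show ((↑[c - 2 + 1] : Multiset ℕ)) = {c - 2 + 1} from rfl, add_comm,
        Multiset.singleton_add]
    rw [hL, show c - 2 + 1 = c - 1 from by omega]
    exact Multiset.cons_swap _ _ _

lemma headI_concat {A : Type*} [Inhabited A] (w : List A) (hw : w ≠ []) (a : A) :
    (w ++ [a]).headI = w.headI := by
  cases w with
  | nil => exact absurd rfl hw
  | cons c w' => rfl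

/-- Lemma 3.18, part (2): if `α_1 = β_1` and `α_R < β_R` then
`|E_{α*,ε_0(α*)}| = |E_{β*,ε_0(α*)}| + 1`. -/
theorem Eset_compare_last_ends
    (α β : List ℕ)
    (hα : IsComposition α) (hβ : IsComposition β)
    (hα1 : α ≠ List.replicate α.length 1) (hβ1 : β ≠ List.replicate β.length 1)
    (hsz : α.sum = β.sum) (hlen : α.length = β.length)
    (hlam : (↑α : Multiset ℕ) = (↑β : Multiset ℕ))
    (hdelta : deltaEnds α = deltaEnds β)
    (hαe : α.headI ≤ α.getLastD 0) (hβe : β.headI ≤ β.getLastD 0)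
    (h1 : α.headI = β.headI) (h2 : α.getLastD 0 < β.getLastD 0) :
    Set.ncard (Eset α.reverse ((epsList α.reverse).getD 0 0)) =
      Set.ncard (Eset β.reverse ((epsList α.reverse).getD 0 0)) + 1 := by
  classical
  rcases List.eq_nil_or_concat α with rfl | ⟨w, a, rfl⟩
  · rcases List.eq_nil_or_concat β with rfl | ⟨u, b, rfl⟩
    · simp at h2
    · simp at hlen
  rcases List.eq_nil_or_concat β with rfl | ⟨u, b, rfl⟩
  · simp at hlen
  simp only [List.concat_eq_append] at hα hβ hαe hβe hlen hlam hdelta h1 h2 ⊢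
  rw [List.getLastD_concat] at h2 hαe
  rw [List.getLastD_concat] at h2 hβe
  -- w, u nonempty
  have hw : w ≠ [] := by
    rintro rfl
    have hu : u = [] := by
      simp only [List.length_append, List.length_cons, List.length_nil] at hlen
      cases u with
      | nil => rfl
      | cons x xs => simp at hlen
    subst hu
    simp only [List.nil_append, List.headI_cons] at h1
    omega
  have hu : u ≠ [] := by
    rintro rfl
    apply hw
    simp only [List.length_append, List.length_cons, List.length_nil] at hlen
    cases w with
    | nil => rfl
    | cons x xs => simp at hlen
  rw [headI_concat w hw a] at h1 hαe
  rw [headI_concat u hu b] at h1 hβe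
  -- basic numeric facts
  have ha1 : 1 ≤ a := hα a (by simp)
  have hw0 : ∀ x ∈ w, 0 < x := fun x hx => hα x (by simp [hx])
  have hu0 : ∀ x ∈ u, 0 < x := fun x hx => hβ x (by simp [hx])
  have ha2 : 2 ≤ a := by
    by_contra h
    have haa : a = 1 := by omega
    have hbb : ¬(b = 1) := by omega
    unfold deltaEnds at hdelta
    rw [List.getLastD_concat, List.getLastD_concat, headI_concat w hw a,
      headI_concat u hu b, h1] at hdelta
    rw [if_pos haa, if_neg hbb] at hdelta
    omega
  have hb2 : 2 ≤ b := by omega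
  -- multiset equality of adjusted parts
  have hperm : (w ++ [a]).Perm (u ++ [b]) := Multiset.coe_eq_coe.mp hlam
  have hZp : (((w ++ [a]).filter fun x => decide (x ≠ 1)).map fun z => z - 2).Perm
      (((u ++ [b]).filter fun x => decide (x ≠ 1)).map fun z => z - 2) :=
    (hperm.filter _).map _
  have hZ : (↑(((w ++ [a]).filter fun x => decide (x ≠ 1)).map fun z => z - 2) : Multiset ℕ)
      = ↑(((u ++ [b]).filter fun x => decide (x ≠ 1)).map fun z => z - 2) :=
    Multiset.coe_eq_coe.mpr hZp
  obtain ⟨A1, A2⟩ := eps_rev w a hw hw0 ha2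
  obtain ⟨B1, B2⟩ := eps_rev u b hu hu0 hb2
  rw [← h1, ← hZ] at B2
  have E : (a - 2) ::ₘ (↑((epsList (w ++ [a]).reverse).tail) : Multiset ℕ)
      = (b - 2) ::ₘ (↑((epsList (u ++ [b]).reverse).tail) : Multiset ℕ) :=
    A2.trans B2.symm
  set Lα := (epsList (w ++ [a]).reverse).tail with hLα
  set Lβ := (epsList (u ++ [b]).reverse).tail with hLβ
  have hab : a - 2 ≠ b - 2 := by omega
  have hmem : a - 2 ∈ (↑Lβ : Multiset ℕ) := by
    have h : a - 2 ∈ (b - 2) ::ₘ (↑Lβ : Multiset ℕ) := by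
      rw [← E]
      exact Multiset.mem_cons_self _ _
    rcases Multiset.mem_cons.mp h with h' | h'
    · exact absurd h' hab
    · exact h'
  set s := ((↑Lβ : Multiset ℕ).erase (a - 2)).toList with hsdef
  have hs : (↑s : Multiset ℕ) = (↑Lβ : Multiset ℕ).erase (a - 2) := Multiset.coe_toList _
  have hβs : (↑Lβ : Multiset ℕ) = (a - 2) ::ₘ ↑s := by
    rw [hs, Multiset.cons_erase hmem]
  have hαs : (↑Lα : Multiset ℕ) = (b - 2) ::ₘ ↑s := by
    have hE := E
    rw [hβs, Multiset.cons_swap] at hE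
    exact (Multiset.cons_inj_right _).mp hE
  have pα : Lα.Perm ((b - 2) :: s) := by
    apply Multiset.coe_eq_coe.mp
    rw [← Multiset.cons_coe]; exact hαs
  have pβ : Lβ.Perm ((a - 2) :: s) := by
    apply Multiset.coe_eq_coe.mp
    rw [← Multiset.cons_coe]; exact hβs
  rw [A1, ncard_Eset, ncard_Eset, ← hLα, ← hLβ, count_perm pα, count_perm pβ]
  have hkey := count_key s (a - 1) (b - 2) (by omega) (by omega)
  rw [show a - 1 - 1 = a - 2 from by omega] at hkey
  exact hkey

end RibbonNearEq
end

section
/- Let α and β be compositions of equal length R with λ(α) = λ(β). If e(α) ≠ e(β), then ap(α) ≠ ap(β), where e(γ) = {γ_1, γ_R} is the multiset of end parts and ap(γ) = {{γ_1,γ_2},{γ_2,γ_3},…,{γ_{R−1},γ_R}} is the multiset of adjacent pairs (each pair taken as a multiset). -/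
namespace RibbonNearEq

/-- The ends `e(γ)` of a composition: the multiset of its two end parts. -/
def ends (γ : List ℕ) : Multiset ℕ := {γ.headI, γ.getLastD 0}

/-- The adjacent pairs `ap(γ)`: the multiset of the multisets `{γ_i, γ_{i+1}}`. -/
def adjacentPairs (γ : List ℕ) : Multiset (Multiset ℕ) :=
  (↑((γ.zip γ.tail).map fun p => ({p.1, p.2} : Multiset ℕ)) : Multiset (Multiset ℕ))

lemma sum_adjacentPairs_add_ends (γ : List ℕ) (h : γ ≠ []) :
    (adjacentPairs γ).sum + ends γ = (↑γ : Multiset ℕ) + (↑γ : Multiset ℕ) := by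
  induction γ with
  | nil => simp at h
  | cons a t ih =>
    cases t with
    | nil => simp [adjacentPairs, ends]
    | cons b s =>
      have ih' := ih (by simp)
      simp only [adjacentPairs, List.zip_cons_cons, List.tail_cons, List.map_cons] at ih' ⊢
      rw [← Multiset.cons_coe, Multiset.sum_cons]
      have hends : ends (a :: b :: s) = {a} + ({b :: s |>.getLastD 0} : Multiset ℕ) := by
        simp [ends]
      have hends' : ends (b :: s) = {b} + ({b :: s |>.getLastD 0} : Multiset ℕ) := by
        simp [ends]
      rw [hends' ] at ih'
      rw [hends]
      have : ({a, b} : Multiset ℕ) = {a} + {b} := rfl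
      rw [this]
      have coe : ((a :: b :: s : List ℕ) : Multiset ℕ) = {a} + (↑(b :: s) : Multiset ℕ) := by
        rfl
      rw [coe]
      have key : ∀ S M L : Multiset ℕ, S + ({b} + L) = M + M →
          {a} + {b} + S + ({a} + L) = {a} + M + ({a} + M) := by
        intro S M L h
        rw [show {a} + {b} + S + ({a} + L) = {a} + {a} + (S + ({b} + L)) by abel, h]
        abel
      exact key _ _ _ ih'

/-- Proposition 3.22: if `λ(α) = λ(β)` and `e(α) ≠ e(β)`, then
`ap(α) ≠ ap(β)`. -/
theorem ends_differ_adjacent_pairs_differ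
    (α β : List ℕ)
    (hα : IsComposition α) (hβ : IsComposition β)
    (hlen : α.length = β.length)
    (hlam : (↑α : Multiset ℕ) = (↑β : Multiset ℕ))
    (he : ends α ≠ ends β) :
    adjacentPairs α ≠ adjacentPairs β := by
  rcases eq_or_ne α [] with rfl | hαne
  · have : β = [] := by
      cases β with
      | nil => rfl
      | cons b t => simp at hlen
    subst this
    exact absurd rfl he
  have hβne : β ≠ [] := by
    intro h; subst h; simp at hlen; exact hαne hlen
  intro hap
  apply he
  have h1 := sum_adjacentPairs_add_ends α hαne
  have h2 := sum_adjacentPairs_add_ends β hβne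
  rw [hap, hlam] at h1
  exact add_left_cancel (h1.trans h2.symm)

end RibbonNearEq
end
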